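/- Suppose the non-conformity score r of an output is defined as the supremum of thresholds τ_r such that every generated subgraph with threshold at most τ_r is coherently factual. If r ≥ t for some t ∈ ℝ, then the subgraph selected as the one with maximal threshold strictly below t is coherently factual. -/
import Mathlib


/-- Non-conformity score of a finite collection of subgraph–threshold pairs:
the supremum (in `EReal`, so `⊤` when all subgraphs are coherently factual) of thresholds
`τ_r` such that every subgraph with threshold at most `τ_r` is coherently factual. -/
noncomputable def nonConformity {U : Type*} (𝒰 : Finset (U × ℝ)) (coh : U → Prop) : EReal :=
  sSup {x : EReal | (∃ τr : ℝ, x = (τr : EReal) ∧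
    ∀ p ∈ 𝒰, p.2 ≤ τr → coh p.1) ∨ (x = ⊤ ∧ ∀ p ∈ 𝒰, coh p.1)}

/-- If the non-conformity score `r ≥ t` for some real `t`, then the subgraph selected as the
one with maximal threshold strictly below `t` is coherently factual. -/
theorem stmt_7 {U : Type*} (𝒰 : Finset (U × ℝ)) (coh : U → Prop)
    (hdistinct : ∀ p ∈ 𝒰, ∀ q ∈ 𝒰, p.2 = q.2 → p = q)
    (t : ℝ) (hr : (t : EReal) ≤ nonConformity 𝒰 coh)
    (pstar : U × ℝ) (hmem : pstar ∈ 𝒰) (hlt : pstar.2 < t)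
    (hmax : ∀ p ∈ 𝒰, p.2 < t → p.2 ≤ pstar.2) :
    coh pstar.1 := by
  have hlt' : (pstar.2 : EReal) < nonConformity 𝒰 coh :=
    lt_of_lt_of_le (by exact_mod_cast hlt) hr
  rw [nonConformity, lt_sSup_iff] at hlt'
  obtain ⟨x, hx, hpx⟩ := hlt'
  rcases hx with ⟨τr, rfl, h⟩ | ⟨rfl, h⟩
  · exact h pstar hmem (le_of_lt (by exact_mod_cast hpx))
  · exact h pstar hmem
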